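/- Let μ be a Borel measure on ℝ^n that is s-concave, s ∈ (−∞, 1), on a class 𝒞 of convex sets, with the property that for every K, L ∈ 𝒞 with μ(K), μ(L) > 0 the mixed measures μ(K;L), μ(K;K) and μ(K;L,L) exist and are finite. Then μ(K)·μ(K;L,L) ≤ (1−s)·μ(K;L)². In particular, if μ is log-concave (s = 0), then μ(K)·μ(K;L,L) ≤ μ(K;L)². -/

import Mathlib

open MeasureTheory Set Filter Topology Pointwise

noncomputable section

/-- The mixed measure `μ(K;L) = lim_{ε→0⁺} (μ(K+εL) − μ(K))/ε` exists and equals `m`. -/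
def HasMixedMeasure {n : ℕ} (μ : Measure (EuclideanSpace ℝ (Fin n)))
    (K L : Set (EuclideanSpace ℝ (Fin n))) (m : ℝ) : Prop :=
  Tendsto (fun ε : ℝ => ((μ (K + ε • L)).toReal - (μ K).toReal) / ε) (𝓝[>] 0) (𝓝 m)

/-- The mixed measure `μ(K;L,L) = d²/ds² μ(K+sL)` at `s = 0` (one-sided) exists and
equals `m`. -/
def HasMixedMeasureSecond {n : ℕ} (μ : Measure (EuclideanSpace ℝ (Fin n)))
    (K L : Set (EuclideanSpace ℝ (Fin n))) (m : ℝ) : Prop :=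
  ∃ g : ℝ → ℝ,
    (∀ s ∈ Ici (0:ℝ),
      HasDerivWithinAt (fun u : ℝ => (μ (K + u • L)).toReal) (g s) (Ici 0) s) ∧
    HasDerivWithinAt g m (Ici 0) 0

/-- A class of sets: closed under Minkowski sums and nonnegative dilations. -/
def IsMinkowskiClass {n : ℕ} (𝒞 : Set (Set (EuclideanSpace ℝ (Fin n)))) : Prop :=
  ∀ K ∈ 𝒞, ∀ L ∈ 𝒞, ∀ s t : ℝ, 0 ≤ s → 0 ≤ t → s • K + t • L ∈ 𝒞

/-- `μ` is `s`-concave on the class `𝒞`: for `s ≠ 0`,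
`μ((1−t)K + tL) ≥ ((1−t)μ(K)^s + tμ(L)^s)^{1/s}`, and for `s = 0` (log-concavity),
`μ((1−t)K + tL) ≥ μ(K)^{1−t}μ(L)^t`, for all `t ∈ [0,1]` and `K, L ∈ 𝒞` with
`μ(K), μ(L) > 0`. -/
def IsSConcave {n : ℕ} (μ : Measure (EuclideanSpace ℝ (Fin n))) (s : ℝ)
    (𝒞 : Set (Set (EuclideanSpace ℝ (Fin n)))) : Prop :=
  ∀ K ∈ 𝒞, ∀ L ∈ 𝒞, ∀ t ∈ Icc (0:ℝ) 1, 0 < μ K → 0 < μ L → μ K ≠ ⊤ → μ L ≠ ⊤ →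
    (if s = 0 then (μ K).toReal ^ (1 - t) * (μ L).toReal ^ t
      else ((1 - t) * (μ K).toReal ^ s + t * (μ L).toReal ^ s) ^ (1 / s))
      ≤ (μ ((1 - t) • K + t • L)).toReal


/-- If `h` is concave on `[0, δ]`, differentiable from the right with derivative `p`, and `p`
has one-sided derivative `q` at `0`, then `q ≤ 0`. -/
lemma second_deriv_nonpos_of_concaveOn {h p : ℝ → ℝ} {q δ : ℝ} (hδ : 0 < δ)
    (hcon : ConcaveOn ℝ (Icc 0 δ) h)
    (hp : ∀ t ∈ Icc 0 δ, HasDerivWithinAt h (p t) (Ici 0) t)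
    (hq : HasDerivWithinAt p q (Ici 0) 0) : q ≤ 0 := by
  have h0mem : (0:ℝ) ∈ Icc 0 δ := ⟨le_refl _, hδ.le⟩
  have slopes : ∀ t ∈ Ioc (0:ℝ) δ, ∀ u ∈ Ioo (0:ℝ) t,
      (h t - h u) / (t - u) ≤ (h t - h 0) / t ∧ (h t - h 0) / t ≤ (h u - h 0) / u := by
    intro t ht u hu
    have htI : t ∈ Icc 0 δ := ⟨ht.1.le, ht.2⟩
    have hanti := hcon.slope_anti_adjacent h0mem htI hu.1 hu.2
    rw [sub_zero] at hanti
    have hu0 : 0 < u := hu.1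
    have hut : 0 < t - u := sub_pos.2 hu.2
    have ht0 : 0 < t := ht.1
    constructor
    · rw [div_le_div_iff₀ hut ht0]
      rw [div_le_div_iff₀ hut hu0] at hanti
      nlinarith
    · rw [div_le_div_iff₀ ht0 hu0]
      rw [div_le_div_iff₀ hut hu0] at hanti
      nlinarith
  have key : ∀ t ∈ Ioc (0:ℝ) δ, p t ≤ p 0 := by
    intro t ht
    have htI : t ∈ Icc 0 δ := ⟨ht.1.le, ht.2⟩
    have hge : (h t - h 0) / t ≤ p 0 := by
      have hp0 := hp 0 h0mem
      rw [hasDerivWithinAt_iff_tendsto_slope, Ici_sdiff_left] at hp0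
      refine ge_of_tendsto hp0 ?_
      filter_upwards [Ioo_mem_nhdsGT_of_mem ⟨le_refl (0:ℝ), ht.1⟩] with u hu
      rw [slope_def_field, sub_zero]
      exact (slopes t ht u hu).2
    have hle : p t ≤ (h t - h 0) / t := by
      have hpt := hp t htI
      rw [hasDerivWithinAt_iff_tendsto_slope] at hpt
      have hsub : Ioo (0:ℝ) t ⊆ Ici 0 \ {t} := fun u hu => ⟨hu.1.le, ne_of_lt hu.2⟩
      have hpt' : Tendsto (slope h t) (𝓝[Ioo 0 t] t) (𝓝 (p t)) :=
        hpt.mono_left (nhdsWithin_mono _ hsub)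
      have : (𝓝[Ioo (0:ℝ) t] t).NeBot := by
        rw [nhdsWithin_Ioo_eq_nhdsLT ht.1]; infer_instance
      refine le_of_tendsto hpt' ?_
      filter_upwards [self_mem_nhdsWithin] with u hu
      rw [slope_def_field]
      have h1 := (slopes t ht u hu).1
      rw [show h u - h t = -(h t - h u) by ring, show u - t = -(t - u) by ring, neg_div_neg_eq]
      exact h1
    exact hle.trans hge
  rw [hasDerivWithinAt_iff_tendsto_slope, Ici_sdiff_left] at hq
  refine le_of_tendsto hq ?_
  filter_upwards [Ioc_mem_nhdsGT_of_mem ⟨le_refl (0:ℝ), hδ⟩] with u hu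
  rw [slope_def_field, sub_zero]
  exact div_nonpos_of_nonpos_of_nonneg (sub_nonpos.2 (key u hu)) hu.1.le

/-- Minkowski's second inequality for `s`-concave measures, `s ∈ (−∞,1)`:
`μ(K)·μ(K;L,L) ≤ (1−s)·μ(K;L)²` (in particular `μ(K)μ(K;L,L) ≤ μ(K;L)²` for
log-concave `μ`, i.e. `s = 0`). -/
theorem minkowski_second_for_s_concave_measures {n : ℕ}
    (μ : Measure (EuclideanSpace ℝ (Fin n))) (s : ℝ) (hs : s < 1)
    (𝒞 : Set (Set (EuclideanSpace ℝ (Fin n))))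
    (hconv : ∀ A ∈ 𝒞, Convex ℝ A)
    (hclass : IsMinkowskiClass 𝒞)
    (hSC : IsSConcave μ s 𝒞)
    (hex : ∀ K ∈ 𝒞, ∀ L ∈ 𝒞, 0 < μ K → 0 < μ L →
      (∃ m, HasMixedMeasure μ K L m) ∧ (∃ m, HasMixedMeasure μ K K m) ∧
      (∃ m, HasMixedMeasureSecond μ K L m))
    (K L : Set (EuclideanSpace ℝ (Fin n))) (hK : K ∈ 𝒞) (hL : L ∈ 𝒞)
    (hK0 : 0 < μ K) (hL0 : 0 < μ L) (hKfin : μ K ≠ ⊤) (hLfin : μ L ≠ ⊤)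
    (mKL mKLL : ℝ)
    (hKL : HasMixedMeasure μ K L mKL) (hKLL : HasMixedMeasureSecond μ K L mKLL) :
    (μ K).toReal * mKLL ≤ (1 - s) * mKL ^ 2 := by
  obtain ⟨g, hg, hg'⟩ := hKLL
  set f : ℝ → ℝ := fun t => (μ (K + t • L)).toReal with hfdef
  have hLne : L.Nonempty := by
    rcases L.eq_empty_or_nonempty with h | h
    · exfalso; rw [h] at hL0; simp at hL0
    · exact h
  have hf0 : f 0 = (μ K).toReal := by
    simp only [hfdef, zero_smul_set hLne, add_zero]
  have hg0 : g 0 = mKL := by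
    have h0 := hg 0 self_mem_Ici
    rw [hasDerivWithinAt_iff_tendsto_slope, Ici_sdiff_left] at h0
    have heq : (fun ε : ℝ => ((μ (K + ε • L)).toReal - (μ K).toReal) / ε) = slope f 0 := by
      funext ε; rw [slope_def_field, sub_zero, hf0]
    rw [HasMixedMeasure, heq] at hKL
    exact tendsto_nhds_unique h0 hKL
  have hfK : 0 < f 0 := by rw [hf0]; exact ENNReal.toReal_pos hK0.ne' hKfin
  have hf0ne : f 0 ≠ 0 := hfK.ne'
  obtain ⟨δ, hδ, hδpos⟩ : ∃ δ, 0 < δ ∧ ∀ t ∈ Icc (0:ℝ) δ, 0 < f t := by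
    have hcont : ContinuousWithinAt f (Ici 0) 0 := (hg 0 self_mem_Ici).continuousWithinAt
    have hev : {t : ℝ | 0 < f t} ∈ 𝓝[Ici 0] (0:ℝ) := hcont (isOpen_Ioi.mem_nhds hfK)
    rw [mem_nhdsGE_iff_exists_Icc_subset] at hev
    obtain ⟨δ, hδ1, hδ2⟩ := hev
    exact ⟨δ, hδ1, fun t ht => hδ2 ht⟩
  have hmem : ∀ t : ℝ, 0 ≤ t → K + t • L ∈ 𝒞 := by
    intro t ht
    have := hclass K hK L hL 1 t zero_le_one ht
    rwa [one_smul] at this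
  have hpos : ∀ t ∈ Icc (0:ℝ) δ, 0 < μ (K + t • L) ∧ μ (K + t • L) ≠ ⊤ := by
    intro t ht
    have := ENNReal.toReal_pos_iff.mp (hδpos t ht)
    exact ⟨this.1, this.2.ne⟩
  have hcomb : ∀ x y a b : ℝ, 0 ≤ x → 0 ≤ y → 0 ≤ a → 0 ≤ b → a + b = 1 →
      a • (K + x • L) + b • (K + y • L) = K + (a * x + b * y) • L := by
    intro x y a b hx hy ha hb hab
    rw [smul_add, smul_add, smul_smul, smul_smul, add_add_add_comm,
      ← (hconv K hK).add_smul ha hb, ← (hconv L hL).add_smul (mul_nonneg ha hx) (mul_nonneg hb hy),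
      hab, one_smul]
  have hSC' : ∀ x ∈ Icc (0:ℝ) δ, ∀ y ∈ Icc (0:ℝ) δ, ∀ a b : ℝ, 0 ≤ a → 0 ≤ b → a + b = 1 →
      (if s = 0 then f x ^ a * f y ^ b else (a * f x ^ s + b * f y ^ s) ^ (1/s))
        ≤ f (a * x + b * y) := by
    intro x hx y hy a b ha hb hab
    have hb1 : b ≤ 1 := by linarith
    have h1 := hSC (K + x • L) (hmem x hx.1) (K + y • L) (hmem y hy.1) b ⟨hb, hb1⟩
      (hpos x hx).1 (hpos y hy).1 (hpos x hx).2 (hpos y hy).2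
    rw [show (1:ℝ) - b = a by linarith, hcomb x y a b hx.1 hy.1 ha hb hab] at h1
    exact h1
  -- derivative of t ↦ f t ^ s' (for exponent s' and t with f t ≠ 0)
  have hrpow : ∀ (c : ℝ), ∀ t ∈ Icc (0:ℝ) δ,
      HasDerivWithinAt (fun u => f u ^ c) (g t * c * f t ^ (c - 1)) (Ici 0) t := by
    intro c t ht
    exact (hg t ht.1).rpow_const (Or.inl (hδpos t ht).ne')
  have h0mem : (0:ℝ) ∈ Icc 0 δ := ⟨le_refl _, hδ.le⟩
  have hFs : f 0 ^ (s-1) = f 0 ^ (s-2) * f 0 := by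
    rw [show s - 1 = (s-2) + 1 by ring, Real.rpow_add_one hf0ne]
  have hP : 0 < f 0 ^ (s-2) := Real.rpow_pos_of_pos hfK _
  rcases lt_trichotomy s 0 with hsneg | hs0 | hspos
  · -- s < 0 : t ↦ f t ^ s is convex
    have hcvx : ConvexOn ℝ (Icc 0 δ) (fun t => f t ^ s) := by
      refine ⟨convex_Icc 0 δ, ?_⟩
      intro x hx y hy a b ha hb hab
      simp only [smul_eq_mul]
      have key := hSC' x hx y hy a b ha hb hab
      rw [if_neg hsneg.ne] at key
      have hPx : 0 < f x ^ s := Real.rpow_pos_of_pos (hδpos x hx) s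
      have hPy : 0 < f y ^ s := Real.rpow_pos_of_pos (hδpos y hy) s
      have hX : 0 < a * f x ^ s + b * f y ^ s := by
        rcases lt_min_iff.mpr ⟨hPx, hPy⟩ with hm
        have h1 := mul_nonneg ha (sub_nonneg.2 (min_le_left (f x ^ s) (f y ^ s)))
        have h2 := mul_nonneg hb (sub_nonneg.2 (min_le_right (f x ^ s) (f y ^ s)))
        nlinarith
      have h2 := Real.rpow_le_rpow_of_nonpos (Real.rpow_pos_of_pos hX (1/s)) key hsneg.le
      rwa [← Real.rpow_mul hX.le, one_div, inv_mul_cancel₀ hsneg.ne, Real.rpow_one] at h2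
    have hqle := second_deriv_nonpos_of_concaveOn hδ hcvx.neg
      (fun t ht => (hrpow s t ht).neg)
      (((hg'.mul_const s).mul ((hg 0 self_mem_Ici).rpow_const (Or.inl hf0ne))).neg)
    rw [neg_nonpos] at hqle
    rw [show s - 1 - 1 = s - 2 by ring, hFs] at hqle
    rw [← hf0, ← hg0]
    nlinarith [mul_pos (neg_pos.2 hsneg) hP, sq_nonneg (g 0)]
  · -- s = 0 : t ↦ log (f t) is concave
    subst hs0
    have hconc : ConcaveOn ℝ (Icc 0 δ) (fun t => Real.log (f t)) := by
      refine ⟨convex_Icc 0 δ, ?_⟩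
      intro x hx y hy a b ha hb hab
      simp only [smul_eq_mul]
      have key := hSC' x hx y hy a b ha hb hab
      rw [if_pos rfl] at key
      have hPx : 0 < f x ^ a := Real.rpow_pos_of_pos (hδpos x hx) a
      have hPy : 0 < f y ^ b := Real.rpow_pos_of_pos (hδpos y hy) b
      calc a * Real.log (f x) + b * Real.log (f y)
          = Real.log (f x ^ a * f y ^ b) := by
            rw [Real.log_mul hPx.ne' hPy.ne', Real.log_rpow (hδpos x hx),
              Real.log_rpow (hδpos y hy)]
        _ ≤ Real.log (f (a * x + b * y)) := Real.log_le_log (mul_pos hPx hPy) key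
    have hqle := second_deriv_nonpos_of_concaveOn hδ hconc
      (fun t ht => (hg t ht.1).log (hδpos t ht).ne')
      (hg'.div (hg 0 self_mem_Ici) hf0ne)
    rw [div_nonpos_iff] at hqle
    rw [← hf0, ← hg0]
    rcases hqle with ⟨h1, _⟩ | ⟨_, h2⟩
    · nlinarith [sq_nonneg (f 0)]
    · nlinarith [sq_nonneg (f 0), sq_nonneg (g 0)]
  · -- s > 0 : t ↦ f t ^ s is concave
    have hconc : ConcaveOn ℝ (Icc 0 δ) (fun t => f t ^ s) := by
      refine ⟨convex_Icc 0 δ, ?_⟩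
      intro x hx y hy a b ha hb hab
      simp only [smul_eq_mul]
      have key := hSC' x hx y hy a b ha hb hab
      rw [if_neg hspos.ne'] at key
      have hXnn : 0 ≤ a * f x ^ s + b * f y ^ s :=
        add_nonneg (mul_nonneg ha (Real.rpow_nonneg (hδpos x hx).le s))
          (mul_nonneg hb (Real.rpow_nonneg (hδpos y hy).le s))
      have h2 := Real.rpow_le_rpow (Real.rpow_nonneg hXnn (1/s)) key hspos.le
      rwa [← Real.rpow_mul hXnn, one_div, inv_mul_cancel₀ hspos.ne', Real.rpow_one] at h2
    have hqle := second_deriv_nonpos_of_concaveOn hδ hconc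
      (fun t ht => hrpow s t ht)
      ((hg'.mul_const s).mul ((hg 0 self_mem_Ici).rpow_const (Or.inl hf0ne)))
    rw [show s - 1 - 1 = s - 2 by ring, hFs] at hqle
    rw [← hf0, ← hg0]
    nlinarith [mul_pos hspos hP, sq_nonneg (g 0)]
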